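/- Let V be a finite set of size n ≥ 5 and A = (a_{ij})_{i,j∈V} an inseparable skew-symmetric matrix over a field of characteristic ≠ 2. Then there exists x ∈ V such that A[V\{x}] is inseparable. -/

import Mathlib

set_option linter.unusedSectionVars false
set_option maxHeartbeats 1000000

open Matrix

/-- `I` is a clan of the principal submatrix `A[W]`. -/
def IsClanIn {V K : Type*} [DecidableEq V] (A : Matrix V V K) (W I : Finset V) : Prop :=
  I ⊆ W ∧ ∀ i ∈ I, ∀ j ∈ I, ∀ x ∈ W \ I, A x i = A x j ∧ A i x = A j x

/-- The principal submatrix `A[W]` is separable. -/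
def SeparableIn {V K : Type*} [DecidableEq V] (A : Matrix V V K) (W : Finset V) : Prop :=
  ∃ I : Finset V, I ⊆ W ∧ I.Nonempty ∧ (W \ I).Nonempty ∧
    IsClanIn A W I ∧ IsClanIn A W (W \ I)

namespace SkewSep

open Finset

variable {V K : Type*} [Fintype V] [DecidableEq V] [Field K]

/-- `S` is the source side of a split of the full matrix with constant `c`. -/
def SplV (A : Matrix V V K) (S : Finset V) (c : K) : Prop :=
  S.Nonempty ∧ (∃ t, t ∉ S) ∧ ∀ s ∈ S, ∀ t, t ∉ S → A s t = c

/-- `S` is the source side of a split of the matrix with row/column `x` removed. -/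
def Spl (A : Matrix V V K) (x : V) (S : Finset V) (c : K) : Prop :=
  x ∉ S ∧ S.Nonempty ∧ (∃ t, t ≠ x ∧ t ∉ S) ∧ ∀ s ∈ S, ∀ t, t ≠ x → t ∉ S → A s t = c

variable {A : Matrix V V K}

lemma spl_flip (skew : ∀ i j, A i j = - A j i) {x : V} {S : Finset V} {c : K}
    (h : Spl A x S c) :
    Spl A x (univ.filter (fun t => t ≠ x ∧ t ∉ S)) (-c) := by
  obtain ⟨hxS, ⟨s₀, hs₀⟩, ⟨t₀, ht₀x, ht₀⟩, hsp⟩ := h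
  refine ⟨by simp, ⟨t₀, by simp [ht₀x, ht₀]⟩,
    ⟨s₀, fun h => hxS (h ▸ hs₀), by simp [hs₀]⟩, ?_⟩
  intro s hs t htx ht
  simp only [Finset.mem_filter, Finset.mem_univ, true_and] at hs ht
  push_neg at ht
  rw [skew, hsp t (ht htx) s hs.1 hs.2]

lemma spl_side (skew : ∀ i j, A i j = - A j i) {x : V} {S : Finset V} {c : K}
    (h : Spl A x S c) (y : V) (hyx : y ≠ x) :
    ∃ S' c', Spl A x S' c' ∧ y ∈ S' := by
  by_cases hy : y ∈ S
  · exact ⟨S, c, h, hy⟩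
  · exact ⟨_, -c, spl_flip skew h, by simp [hyx, hy]⟩

lemma fact0r (H1 : ∀ (S : Finset V) (c : K), ¬ SplV A S c) {x : V} {S : Finset V} {c : K}
    (h : Spl A x S c) : ∃ s ∈ S, A s x ≠ c := by
  by_contra hb
  push_neg at hb
  refine H1 S c ⟨h.2.1, ⟨x, h.1⟩, ?_⟩
  intro s hs t ht
  by_cases htx : t = x
  · subst htx; exact hb s hs
  · exact h.2.2.2 s hs t htx ht

lemma cl_c (H1 : ∀ (S : Finset V) (c : K), ¬ SplV A S c) {x y : V} {S P : Finset V} {c : K}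
    (h1 : Spl A x S c) (hy : y ∈ S) (h2 : Spl A y P c) (hx : x ∈ P)
    {u : V} (huS : u ∉ S) (hux : u ≠ x) (huP : u ∉ P) (huy : u ≠ y) : False := by
  apply H1 (univ.filter (fun v => v ∈ S ∨ v = x ∨ v ∈ P ∨ v = y)) c
  refine ⟨⟨x, by simp⟩, ⟨u, by simp [huS, hux, huP, huy]⟩, ?_⟩
  intro s hs t ht
  simp only [Finset.mem_filter, Finset.mem_univ, true_and] at hs ht
  push_neg at ht
  obtain ⟨htS, htx, htP, hty⟩ := ht
  rcases hs with hsS | hsx | hsP | hsy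
  · exact h1.2.2.2 s hsS t htx htS
  · rw [hsx]; exact h2.2.2.2 x hx t hty htP
  · exact h2.2.2.2 s hsP t hty htP
  · rw [hsy]; exact h1.2.2.2 y hy t htx htS

lemma exists_two_outside (hcard : 5 ≤ Fintype.card V) (a b c : V) :
    ∃ u₁ u₂ : V, u₁ ≠ u₂ ∧ (u₁ ≠ a ∧ u₁ ≠ b ∧ u₁ ≠ c) ∧ (u₂ ≠ a ∧ u₂ ≠ b ∧ u₂ ≠ c) := by
  classical
  have h3 : ({a, b, c} : Finset V).card ≤ 3 := by
    have h1 := Finset.card_insert_le a ({b, c} : Finset V)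
    have h2 := Finset.card_insert_le b ({c} : Finset V)
    simp only [Finset.card_singleton] at h2
    omega
  have h : 1 < (({a, b, c} : Finset V)ᶜ).card := by
    rw [Finset.card_compl]
    omega
  obtain ⟨u₁, hu₁, u₂, hu₂, hne⟩ := Finset.one_lt_card.mp h
  simp only [Finset.mem_compl, Finset.mem_insert, Finset.mem_singleton, not_or] at hu₁ hu₂
  exact ⟨u₁, u₂, hne, hu₁, hu₂⟩

lemma exists_outside (hcard : 5 ≤ Fintype.card V) (a b c : V) :
    ∃ u : V, u ≠ a ∧ u ≠ b ∧ u ≠ c := by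
  obtain ⟨u₁, _, _, h, _⟩ := exists_two_outside hcard a b c
  exact ⟨u₁, h⟩


/-- Double pendant lemma: rows `y` (off `x`) and `x` (off `w`) both constant is impossible. -/
lemma dp (skew : ∀ i j, A i j = - A j i) (H1 : ∀ (S : Finset V) (c : K), ¬ SplV A S c)
    (H2 : ∀ x : V, ∃ S c, Spl A x S c) (hcard : 5 ≤ Fintype.card V)
    {y x w : V} {c d : K} (hyx : y ≠ x)
    (hry : ∀ v, v ≠ y → v ≠ x → A y v = c)
    (hxw : x ≠ w)
    (hrx : ∀ v, v ≠ x → v ≠ w → A x v = d)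
    (hwy : w ≠ y) : False := by
  classical
  have hxy : x ≠ y := hyx.symm
  have F1 : A x y = d := hrx y hxy.symm hwy.symm
  have F2 : d ≠ -c := by
    intro h
    refine H1 (univ.filter (fun v => v ≠ y)) (-c) ⟨⟨x, by simp [hxy]⟩, ⟨y, by simp⟩, ?_⟩
    intro s hs t ht
    simp only [Finset.mem_filter, Finset.mem_univ, true_and, not_not] at hs ht
    subst ht
    by_cases hsx : s = x
    · subst hsx; rw [F1, h]
    · rw [skew, hry s hs hsx]
  have F3 : A x w ≠ d := by
    intro h
    refine H1 {x} d ⟨⟨x, by simp⟩, ⟨w, by simp [hxw.symm]⟩, ?_⟩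
    intro s hs t ht
    simp only [Finset.mem_singleton] at hs ht
    subst hs
    by_cases htw : t = w
    · subst htw; exact h
    · exact hrx t ht htw
  have main : ∀ u, u ≠ x → u ≠ y → u ≠ w →
      (∀ m, m ≠ u → m ≠ w → A m w = c) ∨ c = d := by
    intro u hux huy huw
    obtain ⟨S₀, e₀, h₀⟩ := H2 u
    obtain ⟨M, e, hM, hyM⟩ := spl_side skew h₀ y huy.symm
    have hMsp := hM.2.2.2
    obtain ⟨t₁, ht₁u, ht₁M⟩ := hM.2.2.1
    have ht₁y : t₁ ≠ y := fun h => ht₁M (h ▸ hyM)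
    by_cases hxM : x ∈ M
    · have ht₁x : t₁ ≠ x := fun h => ht₁M (h ▸ hxM)
      have hec : e = c := (hMsp y hyM t₁ ht₁u ht₁M).symm.trans (hry t₁ ht₁y ht₁x)
      by_cases hw : ∃ n, n ≠ u ∧ n ∉ M ∧ n ≠ w
      · obtain ⟨n, hnu, hnM, hnw⟩ := hw
        right
        have h1 : A x n = e := hMsp x hxM n hnu hnM
        have h2 : A x n = d := hrx n (fun h => hnM (h ▸ hxM)) hnw
        rw [h1, hec] at h2
        exact h2
      · push_neg at hw
        left
        have ht₁w : t₁ = w := hw t₁ ht₁u ht₁M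
        subst ht₁w
        intro m hmu hmw
        have hmM : m ∈ M := by
          by_contra hmM
          exact hmw (hw m hmu hmM)
        rw [hMsp m hmM t₁ ht₁u ht₁M, hec]
    · exfalso
      by_cases hn : ∃ n, n ≠ u ∧ n ∉ M ∧ n ≠ x
      · obtain ⟨n, hnu, hnM, hnx⟩ := hn
        have hny : n ≠ y := fun h => hnM (h ▸ hyM)
        have e1 : A y n = e := hMsp y hyM n hnu hnM
        have e2 : A y x = e := hMsp y hyM x (Ne.symm hux) hxM
        have e3 : A y x = -d := by rw [skew, F1]
        have h6 : c = -d := by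
          rw [← hry n hny hnx, e1, ← e2, e3]
        exact F2 (by rw [h6]; ring)
      · push_neg at hn
        have hwu : w ≠ u := fun h => huw h.symm
        have hwM : w ∈ M := by
          by_contra hwM
          exact hxw.symm (hn w hwu hwM)
        have e2 : A y x = e := hMsp y hyM x (Ne.symm hux) hxM
        have e3 : A w x = e := hMsp w hwM x (Ne.symm hux) hxM
        have e4 : A w x = -d := by rw [e3, ← e2, skew, F1]
        rw [skew] at e4
        exact F3 (neg_injective e4)
  by_cases hcd : c = d
  · subst hcd
    have hcc : c ≠ -c := F2
    obtain ⟨S₀, g₀, h₀⟩ := H2 y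
    obtain ⟨Sy, g, hSy, hxSy⟩ := spl_side skew h₀ x hxy
    have hsp := hSy.2.2.2
    obtain ⟨t₁, ht₁y, ht₁S⟩ := hSy.2.2.1
    have ht₁x : t₁ ≠ x := fun h => ht₁S (h ▸ hxSy)
    by_cases hwS : w ∈ Sy
    · have ht₁w : t₁ ≠ w := fun h => ht₁S (h ▸ hwS)
      have hgc : g = c := by
        rw [← hsp x hxSy t₁ ht₁y ht₁S]
        exact hrx t₁ ht₁x ht₁w
      refine H1 (insert y Sy) c ⟨⟨y, by simp⟩, ⟨t₁, by simp [ht₁y, ht₁S]⟩, ?_⟩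
      intro s hs t ht
      simp only [Finset.mem_insert, not_or] at hs ht
      obtain ⟨hty, htS⟩ := ht
      rcases hs with rfl | hs
      · exact hry t hty (fun h => htS (h ▸ hxSy))
      · rw [hsp s hs t hty htS, hgc]
    · by_cases ht : ∃ t, t ≠ y ∧ t ∉ Sy ∧ t ≠ w
      · obtain ⟨t, hty, htS, htw⟩ := ht
        have htx : t ≠ x := fun h => htS (h ▸ hxSy)
        have h1 : A x t = g := hsp x hxSy t hty htS
        have h2 : A x w = g := hsp x hxSy w hwy hwS
        exact F3 (by rw [h2, ← h1, hrx t htx htw])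
      · push_neg at ht
        have hcol : ∀ s, s ≠ y → s ≠ w → A s w = g := by
          intro s hsy hsw
          have hsS : s ∈ Sy := by
            by_contra h
            exact hsw (ht s hsy h)
          exact hsp s hsS w hwy hwS
        have hgc : g ≠ c := by
          intro h
          refine H1 (univ.filter (fun v => v ≠ w)) c ⟨⟨x, by simp [hxw]⟩, ⟨w, by simp⟩, ?_⟩
          intro s hs t hT
          simp only [Finset.mem_filter, Finset.mem_univ, true_and, not_not] at hs hT
          rw [hT]
          by_cases hsy : s = y
          · subst hsy
            exact hry w hwy hxw.symm
          · rw [hcol s hsy hs, h]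
        obtain ⟨u, hux, huy, huw⟩ := exists_outside hcard x y w
        obtain ⟨S₁, e₁, h₁⟩ := H2 u
        obtain ⟨M, e, hM, hyM⟩ := spl_side skew h₁ y huy.symm
        have hMsp := hM.2.2.2
        obtain ⟨n₁, hn₁u, hn₁M⟩ := hM.2.2.1
        have hn₁y : n₁ ≠ y := fun h => hn₁M (h ▸ hyM)
        by_cases hxM : x ∈ M
        · have hn₁x : n₁ ≠ x := fun h => hn₁M (h ▸ hxM)
          have hec : e = c := (hMsp y hyM n₁ hn₁u hn₁M).symm.trans (hry n₁ hn₁y hn₁x)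
          have hwM : w ∈ M := by
            by_contra hwM
            have h1 : A x w = e := hMsp x hxM w (fun h => huw h.symm) hwM
            exact F3 (h1.trans hec)
          have hn₁w : n₁ ≠ w := fun h => hn₁M (h ▸ hwM)
          have hng : -g = c := by
            have h1 : A w n₁ = e := hMsp w hwM n₁ hn₁u hn₁M
            have h2 : A n₁ w = g := hcol n₁ hn₁y hn₁w
            rw [← hec, ← h1, skew, h2]
          refine H1 {x, y, w} c ⟨⟨x, by simp⟩, ⟨u, by simp [hux, huy, huw]⟩, ?_⟩
          intro s hs t hT
          simp only [Finset.mem_insert, Finset.mem_singleton, not_or] at hs hT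
          obtain ⟨htx, hty, htw⟩ := hT
          rcases hs with rfl | rfl | rfl
          · exact hrx t htx htw
          · exact hry t hty htx
          · rw [skew, hcol t hty htw, hng]
        · by_cases hn : ∃ n, n ≠ u ∧ n ∉ M ∧ n ≠ x
          · obtain ⟨n, hnu, hnM, hnx⟩ := hn
            have hny : n ≠ y := fun h => hnM (h ▸ hyM)
            have e1 : A y n = e := hMsp y hyM n hnu hnM
            have e2 : A y x = e := hMsp y hyM x (Ne.symm hux) hxM
            have h6 : A y x = -c := by rw [skew, F1]
            have h7 : A y x = c := by
              rw [e2, ← e1]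
              exact hry n hny hnx
            exact hcc (h7.symm.trans h6)
          · push_neg at hn
            have hwM : w ∈ M := by
              by_contra hwM
              exact hxw.symm (hn w (fun h => huw h.symm) hwM)
            have e2 : A y x = e := hMsp y hyM x (Ne.symm hux) hxM
            have e3 : A w x = e := hMsp w hwM x (Ne.symm hux) hxM
            apply hgc
            have h4 : A x w = g := hcol x hxy hxw
            have h5 : A w x = -c := by rw [e3, ← e2, skew, F1]
            rw [skew] at h5
            rw [← neg_injective h5, h4]
  · obtain ⟨u₁, u₂, hne, hu₁, hu₂⟩ := exists_two_outside hcard x y w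
    have m₁ := (main u₁ hu₁.1 hu₁.2.1 hu₁.2.2).resolve_right hcd
    have m₂ := (main u₂ hu₂.1 hu₂.2.1 hu₂.2.2).resolve_right hcd
    refine H1 (univ.filter (fun v => v ≠ w)) c ⟨⟨x, by simp [hxw]⟩, ⟨w, by simp⟩, ?_⟩
    intro s hs t hT
    simp only [Finset.mem_filter, Finset.mem_univ, true_and, not_not] at hs hT
    rw [hT]
    by_cases h : s = u₁
    · exact m₂ s (fun hh => hne (h.symm.trans hh)) hs
    · exact m₁ s h hs


/-- A "flaw" for `z`: a nonempty set `U` avoiding `x,y,z` all of whose incoming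
entries (except possibly from `z`) equal `c`. -/
def Flaw (A : Matrix V V K) (x y z : V) (c : K) (U : Finset V) : Prop :=
  U.Nonempty ∧ (∀ u ∈ U, u ≠ x ∧ u ≠ y ∧ u ≠ z) ∧
    ∀ u ∈ U, ∀ v, v ∉ U → v ≠ z → A v u = c

/-- The pendant case: a row `y` constant off a single entry `x` is impossible. -/
lemma pend_false (skew : ∀ i j, A i j = - A j i)
    (H1 : ∀ (S : Finset V) (c : K), ¬ SplV A S c)
    (H2 : ∀ x : V, ∃ S c, Spl A x S c) (hcard : 5 ≤ Fintype.card V)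
    {y x : V} {c : K} (hyx : y ≠ x)
    (hrow : ∀ v, v ≠ y → v ≠ x → A y v = c) : False := by
  classical
  have E1 : A y x ≠ c := by
    intro h
    refine H1 {y} c ⟨⟨y, by simp⟩, ?_, ?_⟩
    · obtain ⟨t, ht⟩ := Fintype.exists_ne_of_one_lt_card (by omega) y
      exact ⟨t, by simp [ht]⟩
    · intro s hs t ht
      simp only [Finset.mem_singleton] at hs ht
      subst hs
      by_cases htx : t = x
      · subst htx; exact h
      · exact hrow t ht htx
  have hdp : ∀ w (f : K), w ≠ x → w ≠ y → (∀ v, v ≠ x → v ≠ w → A x v = f) → False := by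
    intro w f hwx hwy hr
    exact dp skew H1 H2 hcard hyx hrow (Ne.symm hwx) hr hwy
  -- every z ≠ y admits a flaw
  have hFl : ∀ z, z ≠ y → ∃ U : Finset V, Flaw A x y z c U := by
    intro z hzy
    obtain ⟨S₀, c₀, h₀⟩ := H2 z
    obtain ⟨G, f, hG, hyG⟩ := spl_side skew h₀ y (Ne.symm hzy)
    have hGsp := hG.2.2.2
    obtain ⟨t₁, ht₁z, ht₁G⟩ := hG.2.2.1
    have ht₁y : t₁ ≠ y := fun h => ht₁G (h ▸ hyG)
    by_cases hzx : z = x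
    · subst hzx
      have hfc : f = c := (hGsp y hyG t₁ ht₁z ht₁G).symm.trans (hrow t₁ ht₁y ht₁z)
      refine ⟨univ.filter (fun t => t ≠ z ∧ t ∉ G), ⟨t₁, by simp [ht₁z, ht₁G]⟩, ?_, ?_⟩
      · intro u hu
        simp only [Finset.mem_filter, Finset.mem_univ, true_and] at hu
        exact ⟨hu.1, fun h => hu.2 (h ▸ hyG), hu.1⟩
      · intro u hu v hv hvz
        simp only [Finset.mem_filter, Finset.mem_univ, true_and] at hu hv
        push_neg at hv
        rw [hGsp v (hv hvz) u hu.1 hu.2, hfc]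
    · by_cases hxG : x ∈ G
      · have ht₁x : t₁ ≠ x := fun h => ht₁G (h ▸ hxG)
        have hfc : f = c := (hGsp y hyG t₁ ht₁z ht₁G).symm.trans (hrow t₁ ht₁y ht₁x)
        refine ⟨univ.filter (fun t => t ≠ z ∧ t ∉ G), ⟨t₁, by simp [ht₁z, ht₁G]⟩, ?_, ?_⟩
        · intro u hu
          simp only [Finset.mem_filter, Finset.mem_univ, true_and] at hu
          exact ⟨fun h => hu.2 (h ▸ hxG), fun h => hu.2 (h ▸ hyG), hu.1⟩
        · intro u hu v hv hvz
          simp only [Finset.mem_filter, Finset.mem_univ, true_and] at hu hv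
          push_neg at hv
          rw [hGsp v (hv hvz) u hu.1 hu.2, hfc]
      · exfalso
        by_cases hH : ∃ h, h ≠ z ∧ h ∉ G ∧ h ≠ x
        · obtain ⟨h, hhz, hhG, hhx⟩ := hH
          have hhy : h ≠ y := fun hh => hhG (hh ▸ hyG)
          apply E1
          have e1 : A y h = f := hGsp y hyG h hhz hhG
          have e2 : A y x = f := hGsp y hyG x (fun hh => hzx hh.symm) hxG
          rw [e2, ← e1, hrow h hhy hhx]
        · push_neg at hH
          apply hdp z (-f) hzx hzy
          intro v hvx hvz
          have hvG : v ∈ G := by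
            by_contra hvG
            exact hvx (hH v hvz hvG)
          rw [skew, hGsp v hvG x (fun hh => hzx hh.symm) hxG]
  -- the union of all flaw sets for z
  set Nf : V → Finset V := fun z => univ.filter (fun u => ∃ U, Flaw A x y z c U ∧ u ∈ U)
    with hNfdef
  have hNmem : ∀ z u, u ∈ Nf z ↔ ∃ U, Flaw A x y z c U ∧ u ∈ U := by
    intro z u
    simp [hNfdef]
  have hNflaw : ∀ z, z ≠ y → Flaw A x y z c (Nf z) := by
    intro z hzy
    obtain ⟨U, hU⟩ := hFl z hzy
    obtain ⟨⟨u₀, hu₀⟩, hprop, hval⟩ := hU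
    refine ⟨⟨u₀, (hNmem z u₀).mpr ⟨U, ⟨⟨u₀, hu₀⟩, hprop, hval⟩, hu₀⟩⟩, ?_, ?_⟩
    · intro u hu
      obtain ⟨U', hU', huU'⟩ := (hNmem z u).mp hu
      exact hU'.2.1 u huU'
    · intro u hu v hvN hvz
      obtain ⟨U', hU', huU'⟩ := (hNmem z u).mp hu
      exact hU'.2.2 u huU' v (fun hvU' => hvN ((hNmem z v).mpr ⟨U', hU', hvU'⟩)) hvz
  have hs : (univ.filter (fun z : V => z ≠ y)).Nonempty := ⟨x, by simp [Ne.symm hyx]⟩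
  obtain ⟨z, hzmem, hzmin⟩ := Finset.exists_min_image _ (fun z => (Nf z).card) hs
  simp only [Finset.mem_filter, Finset.mem_univ, true_and] at hzmem
  have hFz := hNflaw z hzmem
  have hyN : ∀ z', y ∉ Nf z' := by
    intro z' hy
    obtain ⟨U', hU', hyU'⟩ := (hNmem z' y).mp hy
    exact (hU'.2.1 y hyU').2.1 rfl
  -- blocker
  have hblocker : ∃ b ∈ Nf z, A z b ≠ c := by
    by_contra hb
    push_neg at hb
    refine H1 (univ.filter (fun v => v ∉ Nf z)) c ⟨⟨y, by simp [hyN z]⟩, ?_, ?_⟩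
    · obtain ⟨b₀, hb₀⟩ := hFz.1
      exact ⟨b₀, by simp [hb₀]⟩
    · intro s hs' t ht
      simp only [Finset.mem_filter, Finset.mem_univ, true_and, not_not] at hs' ht
      by_cases hsz : s = z
      · subst hsz; exact hb t ht
      · exact hFz.2.2 t ht s hs' hsz
  obtain ⟨b, hbN, hbz⟩ := hblocker
  obtain ⟨hbx, hby, hbzz⟩ := hFz.2.1 b hbN
  have hFb := hNflaw b hby
  by_cases hzb : z ∈ Nf b
  · -- P3 : two-cycle gives a split of V
    have hsub : ∀ u ∈ Nf b, u ≠ z → u ∈ Nf z := by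
      intro u hub huz
      have hUflaw : Flaw A x y z c ((Nf z ∪ Nf b).erase z) := by
        refine ⟨⟨b, by simp [hbN, hbzz]⟩, ?_, ?_⟩
        · intro u' hu'
          simp only [Finset.mem_erase, Finset.mem_union] at hu'
          obtain ⟨hu'z, hu'm⟩ := hu'
          rcases hu'm with h | h
          · exact ⟨(hFz.2.1 u' h).1, (hFz.2.1 u' h).2.1, hu'z⟩
          · exact ⟨(hFb.2.1 u' h).1, (hFb.2.1 u' h).2.1, hu'z⟩
        · intro u' hu' v hv hvz
          simp only [Finset.mem_erase, Finset.mem_union] at hu' hv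
          push_neg at hv
          have hvm : v ∉ Nf z ∧ v ∉ Nf b := by
            have := hv hvz
            exact this
          rcases hu'.2 with h | h
          · exact hFz.2.2 u' h v hvm.1 hvz
          · exact hFb.2.2 u' h v hvm.2 (fun hvb => hvm.1 (hvb ▸ hbN))
      have hu : u ∈ (Nf z ∪ Nf b).erase z := by
        simp only [Finset.mem_erase, Finset.mem_union]
        exact ⟨huz, Or.inr hub⟩
      exact (hNmem z u).mpr ⟨_, hUflaw, hu⟩
    refine H1 (univ.filter (fun v => v ∉ Nf z ∧ v ≠ z)) c
      ⟨⟨y, by simp [hyN z, Ne.symm hzmem]⟩, ⟨z, by simp⟩, ?_⟩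
    intro s hs' t ht
    simp only [Finset.mem_filter, Finset.mem_univ, true_and] at hs' ht
    push_neg at ht
    obtain ⟨hsN, hsz⟩ := hs'
    by_cases htz : t = z
    · subst htz
      refine hFb.2.2 t hzb s ?_ ?_
      · intro hsb
        exact hsN (hsub s hsb hsz)
      · intro h
        exact hsN (h ▸ hbN)
    · have htN : t ∈ Nf z := by
        by_contra hh
        exact htz (ht hh)
      exact hFz.2.2 t htN s hsN hsz
  · -- P4 : flaw set of b strictly smaller, contradicting minimality
    have hsub : Nf b ⊆ Nf z := by
      intro u hub
      have hUflaw : Flaw A x y z c (Nf z ∪ Nf b) := by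
        refine ⟨⟨b, by simp [hbN]⟩, ?_, ?_⟩
        · intro u' hu'
          simp only [Finset.mem_union] at hu'
          rcases hu' with h | h
          · exact hFz.2.1 u' h
          · exact ⟨(hFb.2.1 u' h).1, (hFb.2.1 u' h).2.1, fun hh => hzb (hh ▸ h)⟩
        · intro u' hu' v hv hvz
          simp only [Finset.mem_union] at hu' hv
          push_neg at hv
          rcases hu' with h | h
          · exact hFz.2.2 u' h v hv.1 hvz
          · exact hFb.2.2 u' h v hv.2 (fun hvb => hv.1 (hvb ▸ hbN))
      exact (hNmem z u).mpr ⟨_, hUflaw, by simp [hub]⟩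
    have hstrict : (Nf b).card < (Nf z).card := by
      have h1 : Nf b ⊆ (Nf z).erase b := by
        intro u hu
        simp only [Finset.mem_erase]
        exact ⟨fun h => (hFb.2.1 u hu).2.2 h, hsub hu⟩
      have h2 := Finset.card_le_card h1
      have h3 := Finset.card_erase_of_mem hbN
      have h4 : 0 < (Nf z).card := Finset.card_pos.mpr ⟨b, hbN⟩
      omega
    have := hzmin b (by simp [hby])
    omega


/-- The main contradiction: an inseparable skew matrix on `≥ 5` vertices all of whose
one-vertex deletions are separable is impossible. -/
lemma contra (skew : ∀ i j, A i j = - A j i)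
    (H1 : ∀ (S : Finset V) (c : K), ¬ SplV A S c)
    (H2 : ∀ x : V, ∃ S c, Spl A x S c) (hcard : 5 ≤ Fintype.card V) : False := by
  classical
  -- if some pendant pair exists, use the pendant lemma
  by_cases hpend : ∃ (p q : V) (e : K), p ≠ q ∧ ∀ v, v ≠ p → v ≠ q → A p v = e
  · obtain ⟨p, q, e, hpq, hrow⟩ := hpend
    exact pend_false skew H1 H2 hcard hpq hrow
  push_neg at hpend
  -- a minimal split
  have hV : (0 : ℕ) < Fintype.card V := by omega
  obtain ⟨x₀⟩ := Fintype.card_pos_iff.mp hV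
  have hex : ∃ n : ℕ, ∃ (x : V) (S : Finset V) (c : K), Spl A x S c ∧ S.card = n := by
    obtain ⟨S, c, h⟩ := H2 x₀
    exact ⟨S.card, x₀, S, c, h, rfl⟩
  obtain ⟨x, S, c, hS, hcardS⟩ := Nat.find_spec hex
  have hmin : ∀ (x' : V) (S' : Finset V) (c' : K), Spl A x' S' c' → S.card ≤ S'.card := by
    intro x' S' c' h'
    rw [hcardS]
    exact Nat.find_min' hex ⟨x', S', c', h', rfl⟩
  have hxS : x ∉ S := hS.1
  have s1 := hS.2.2.2
  have hS2 : 2 ≤ S.card := by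
    by_contra h
    push_neg at h
    have h1 : 1 ≤ S.card := Finset.card_pos.mpr hS.2.1
    have h2 : S.card = 1 := by omega
    obtain ⟨s, hs⟩ := Finset.card_eq_one.mp h2
    subst hs
    have hsx : s ≠ x := by
      intro h
      exact hxS (by simp [h])
    obtain ⟨v, hvs, hvx, hv⟩ := hpend s x c hsx
    exact hv (s1 s (by simp) v hvx (by simp [hvs]))
  obtain ⟨y, hyS⟩ := hS.2.1
  have hyx : y ≠ x := fun h => hxS (h ▸ hyS)
  obtain ⟨P₀, d₀, h₀⟩ := H2 y
  obtain ⟨P, d, hP, hxP⟩ := spl_side skew h₀ x hyx.symm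
  have hyP : y ∉ P := hP.1
  have s2' := hP.2.2.2
  have hP2 : 2 ≤ P.card := le_trans hS2 (hmin _ _ _ hP)
  by_cases hD : ∃ u, u ∉ S ∧ u ≠ x ∧ u ∉ P ∧ u ≠ y
  · obtain ⟨z, hzS, hzx, hzP, hzy⟩ := hD
    -- c ≠ d via cl_c
    have hcd : c ≠ d := by
      intro h
      subst h
      exact cl_c H1 hS hyS hP hxP hzS hzx hzP hzy
    -- the A-cell is empty
    have hA : ∀ a, a ∈ S → a ∉ P := by
      intro a haS haP
      have hax : a ≠ x := fun h => hxS (h ▸ haS)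
      have hay : a ≠ y := fun h => hyP (h ▸ haP)
      apply hcd
      have h1 : A a z = c := s1 a haS z hzx hzS
      have h2 : A a z = d := s2' a haP z hzy hzP
      rw [← h1, h2]
    -- pick b ∈ S \ {y} and q ∈ P \ {x}
    obtain ⟨b, hbS, hbny⟩ := Finset.exists_mem_ne (by omega : 1 < S.card) y
    have hbx : b ≠ x := fun h => hxS (h ▸ hbS)
    have hbP : b ∉ P := hA b hbS
    obtain ⟨q, hqP, hqnx⟩ := Finset.exists_mem_ne (by omega : 1 < P.card) x
    have hqy : q ≠ y := fun h => hyP (h ▸ hqP)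
    have hqS : q ∉ S := fun h => hA q h hqP
    -- d = -c
    have hd : d = -c := by
      have h1 : A b q = c := s1 b hbS q hqnx hqS
      have h2 : A q b = d := s2' q hqP b hbny hbP
      rw [h2.symm, skew, h1]
    subst hd
    have hcc : c ≠ -c := hcd
    have s2 : ∀ p t, p ∈ P → t ≠ y → t ∉ P → A p t = -c := fun p t hp => s2' p hp t
    -- A x y ≠ -c
    have hxy' : A x y ≠ -c := by
      obtain ⟨s, hsS, hsx⟩ := fact0r H1 hS
      by_cases hsy : s = y
      · subst hsy
        intro h
        apply hsx
        rw [skew, h, neg_neg]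
      · exfalso
        apply hsx
        have hsP : s ∉ P := hA s hsS
        rw [skew, s2 x s hxP hsy hsP, neg_neg]
    -- third split: delete z
    obtain ⟨M₀, e₀, hM₀⟩ := H2 z
    obtain ⟨M, e, hM, hyM⟩ := spl_side skew hM₀ y hzy.symm
    have hMsp := hM.2.2.2
    have hzM : z ∉ M := hM.1
    obtain ⟨n₁, hn₁z, hn₁M⟩ := hM.2.2.1
    have hn₁y : n₁ ≠ y := fun h => hn₁M (h ▸ hyM)
    by_cases hxM : x ∈ M
    · -- both x,y on the big side
      have keyS : ∀ n, n ≠ z → n ∉ M → n ∈ S → e = -c := by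
        intro n hnz hnM hnS
        have hny : n ≠ y := fun h => hnM (h ▸ hyM)
        have hnP : n ∉ P := hA n hnS
        rw [← hMsp x hxM n hnz hnM]
        exact s2 x n hxP hny hnP
      have keyP : ∀ n, n ≠ z → n ∉ M → n ∉ S → n ∈ P ∧ e = c := by
        intro n hnz hnM hnS
        have hny : n ≠ y := fun h => hnM (h ▸ hyM)
        have hnx : n ≠ x := fun h => hnM (h ▸ hxM)
        have hec : e = c := by
          rw [← hMsp y hyM n hnz hnM]
          exact s1 y hyS n hnx hnS
        refine ⟨?_, hec⟩
        by_contra hnP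
        have h1 : A x n = e := hMsp x hxM n hnz hnM
        have h2 : A x n = -c := s2 x n hxP hny hnP
        exact hcc (hec.symm.trans (h1.symm.trans h2))
      by_cases he : e = c
      · refine H1 (insert z M) c ⟨⟨y, by simp [hyM]⟩, ⟨n₁, by simp [hn₁z, hn₁M]⟩, ?_⟩
        intro s hs t ht
        simp only [Finset.mem_insert, not_or] at hs ht
        obtain ⟨htz, htM⟩ := ht
        have htS : t ∉ S := by
          intro hh
          exact hcc (he ▸ (keyS t htz htM hh))
        have htP : t ∈ P := (keyP t htz htM htS).1
        rcases hs with rfl | hs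
        · rw [skew, s2 t s htP hzy hzP, neg_neg]
        · rw [hMsp s hs t htz htM, he]
      · have hen : e = -c := by
          by_cases h : n₁ ∈ S
          · exact keyS n₁ hn₁z hn₁M h
          · exact absurd (keyP n₁ hn₁z hn₁M h).2 he
        refine H1 (insert z M) (-c) ⟨⟨y, by simp [hyM]⟩, ⟨n₁, by simp [hn₁z, hn₁M]⟩, ?_⟩
        intro s hs t ht
        simp only [Finset.mem_insert, not_or] at hs ht
        obtain ⟨htz, htM⟩ := ht
        have htS : t ∈ S := by
          by_contra h
          exact he (keyP t htz htM h).2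
        rcases hs with rfl | hs
        · rw [skew, s1 t htS s hzx hzS]
        · rw [hMsp s hs t htz htM, hen]
    · -- x on the small side
      have hxz : x ≠ z := fun h => hzx h.symm
      have hAyx : A y x = e := hMsp y hyM x hxz hxM
      by_cases hec : e = c
      · exact hxy' (by rw [skew, hAyx, hec])
      have hMP : ∀ m, m ∈ M → m ≠ y → m ∈ P := by
        intro m hm hmy
        by_contra hmP
        have h1 : A m x = e := hMsp m hm x hxz hxM
        have h2 : A x m = -c := s2 x m hxP hmy hmP
        apply hec
        rw [← h1, skew, h2, neg_neg]
      have hNS : ∀ n, n ≠ z → n ∉ M → n ≠ x → n ∈ S := by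
        intro n hnz hnM hnx
        by_contra hnS
        have h1 : A y n = e := hMsp y hyM n hnz hnM
        have h2 : A y n = c := s1 y hyS n hnx hnS
        exact hec (by rw [← h1, h2])
      have hbM : b ∉ M := fun h => hbP (hMP b h hbny)
      have hbz : b ≠ z := fun h => hzS (h ▸ hbS)
      have hqM : q ∈ M := by
        by_contra h
        have hqz : q ≠ z := fun hh => hzP (hh ▸ hqP)
        exact hqS (hNS q hqz h hqnx)
      have he2 : e = -c := by
        have h1 : A q b = e := hMsp q hqM b hbz hbM
        have h2 : A q b = -c := s2 q b hqP hbny hbP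
        rw [← h1, h2]
      refine H1 (S.filter (fun v => v ≠ y ∧ v ∉ P)) c
        ⟨⟨b, by simp [hbS, hbny, hbP]⟩, ⟨x, by simp [hxS]⟩, ?_⟩
      intro s' hs' t ht
      simp only [Finset.mem_filter] at hs' ht
      obtain ⟨hs'S, hs'y, hs'P⟩ := hs'
      have hs'x : s' ≠ x := fun h => hxS (h ▸ hs'S)
      have hs'z : s' ≠ z := fun h => hzS (h ▸ hs'S)
      have hs'M : s' ∉ M := fun h => hs'P (hMP s' h hs'y)
      push_neg at ht
      by_cases hty : t = y
      · rw [hty, skew, hMsp y hyM s' hs'z hs'M, he2, neg_neg]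
      by_cases htP : t ∈ P
      · rw [skew, s2 t s' htP hs'y hs'P, neg_neg]
      by_cases htz : t = z
      · subst htz
        exact s1 s' hs'S t hzx hzS
      · have htS : t ∉ S := fun h => htP (ht h hty)
        have htx : t ≠ x := fun h => htP (h ▸ hxP)
        by_cases htM : t ∈ M
        · exact absurd (hMP t htM hty) htP
        · exact absurd (hNS t htz htM htx) htS
  · -- no D-cell: the flipped second split fits inside S \ {y}, contradicting minimality
    push_neg at hD
    have hQ := spl_flip skew hP
    set Q := univ.filter (fun t => t ≠ y ∧ t ∉ P) with hQdef
    have hQsub : Q ⊆ S.erase y := by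
      intro u hu
      simp only [hQdef, Finset.mem_filter, Finset.mem_univ, true_and] at hu
      obtain ⟨huy, huP⟩ := hu
      have hux : u ≠ x := fun h => huP (h ▸ hxP)
      have huS : u ∈ S := by
        by_contra h
        exact huy (hD u h hux huP)
      simp only [Finset.mem_erase]
      exact ⟨huy, huS⟩
    have h1 := hmin _ _ _ hQ
    have h2 := Finset.card_le_card hQsub
    have h3 := Finset.card_erase_of_mem hyS
    omega


end SkewSep

theorem exists_inseparable_vertex_deleted {V K : Type*} [Fintype V] [DecidableEq V] [Field K]
    (hchar : (2 : K) ≠ 0)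
    (A : Matrix V V K) (hskew : Aᵀ = -A)
    (hcard : 5 ≤ Fintype.card V)
    (hins : ¬ SeparableIn A Finset.univ) :
    ∃ x : V, ¬ SeparableIn A ({x}ᶜ) := by
  classical
  by_contra hcon
  push_neg at hcon
  have skew : ∀ i j, A i j = - A j i := by
    intro i j
    have h := congrFun (congrFun hskew j) i
    simpa using h
  have H1 : ∀ (S : Finset V) (c : K), ¬ SkewSep.SplV A S c := by
    rintro S c ⟨hSne, ⟨t₀, ht₀⟩, hval⟩
    apply hins
    refine ⟨S, Finset.subset_univ S, hSne, ⟨t₀, by simp [ht₀]⟩, ?_, ?_⟩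
    · refine ⟨Finset.subset_univ S, ?_⟩
      intro i hi j hj r hr
      simp only [Finset.mem_sdiff, Finset.mem_univ, true_and] at hr
      constructor
      · rw [skew r i, skew r j, hval i hi r hr, hval j hj r hr]
      · rw [hval i hi r hr, hval j hj r hr]
    · refine ⟨Finset.sdiff_subset, ?_⟩
      intro i hi j hj r hr
      have hrS : r ∈ S := by
        simp only [Finset.sdiff_sdiff_eq_self (Finset.subset_univ S)] at hr
        exact hr
      simp only [Finset.mem_sdiff, Finset.mem_univ, true_and] at hi hj
      constructor
      · rw [hval r hrS i hi, hval r hrS j hj]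
      · rw [skew i r, skew j r, hval r hrS i hi, hval r hrS j hj]
  have H2 : ∀ x : V, ∃ (S : Finset V) (c : K), SkewSep.Spl A x S c := by
    intro x
    obtain ⟨I, hIsub, hIne, hJne, hclanI, hclanJ⟩ := hcon x
    obtain ⟨i₀, hi₀⟩ := hIne
    obtain ⟨j₀, hj₀⟩ := hJne
    have hxI : x ∉ I := by
      intro hxI
      have := hIsub hxI
      simp at this
    have hj₀x : j₀ ≠ x := by
      have := (Finset.mem_sdiff.mp hj₀).1
      simpa using this
    have hj₀I : j₀ ∉ I := (Finset.mem_sdiff.mp hj₀).2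
    refine ⟨I, A i₀ j₀, hxI, ⟨i₀, hi₀⟩, ⟨j₀, hj₀x, hj₀I⟩, ?_⟩
    intro i hi t htx htI
    have htJ : t ∈ ({x}ᶜ : Finset V) \ I := by
      simp [htx, htI]
    have hiI' : i ∈ ({x}ᶜ : Finset V) \ (({x}ᶜ : Finset V) \ I) := by
      rw [Finset.sdiff_sdiff_eq_self hIsub]
      exact hi
    have h1 := (hclanJ.2 t htJ j₀ hj₀ i hiI').1
    have h2 := (hclanI.2 i hi i₀ hi₀ j₀ hj₀).2
    rw [h1, h2]
  exact SkewSep.contra skew H1 H2 hcard
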